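/- A Kobayashi hyperbolic domain D ⊂ ℂ^d that is circularlike and spirallike with respect to a complete globally asymptotically stable holomorphic vector field V with V(0) = 0 cannot contain a sequence (z_k) with ‖z_k‖ → ∞; equivalently, every such hyperbolic domain is bounded. -/

import Mathlib

open Metric Set Filter Complex

/-- The inverse hyperbolic tangent: `arctanh r = (1/2) · log ((1+r)/(1-r))`. -/
noncomputable def arctanh (r : ℝ) : ℝ := (1 / 2) * Real.log ((1 + r) / (1 - r))

/-- The Poincaré distance on the unit disk: `ρ(a,b) = arctanh |(a-b)/(1 - conj a · b)|`. -/
noncomputable def diskDist (a b : ℂ) : ℝ :=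
  arctanh ‖(a - b) / (1 - (starRingEnd ℂ) a * b)‖

lemma arctanh_nonneg (t : ℝ) (ht : 0 ≤ t) : 0 ≤ arctanh t := by
  unfold arctanh
  rcases eq_or_ne t 1 with h | h
  · simp [h]
  · have h1 : |1 - t| ≤ |1 + t| := by
      rw [_root_.abs_of_nonneg (by linarith : (0:ℝ) ≤ 1 + t)]
      exact abs_le.mpr ⟨by linarith, by linarith⟩
    have h2 : (0:ℝ) < |1 - t| := abs_pos.mpr (by intro hh; apply h; linarith)
    have h3 : (1:ℝ) ≤ |(1 + t) / (1 - t)| := by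
      rw [abs_div, le_div_iff₀ h2]; linarith
    have := Real.log_nonneg h3
    rw [Real.log_abs] at this
    linarith

lemma arctanh_le_two_mul (t : ℝ) (h0 : 0 ≤ t) (h : t ≤ 1/2) : arctanh t ≤ 2 * t := by
  unfold arctanh
  have ht1 : (0:ℝ) < 1 - t := by linarith
  have hpos : 0 < (1+t)/(1-t) := by positivity
  have hl := Real.log_le_sub_one_of_pos hpos
  have h2 : (1+t)/(1-t) - 1 ≤ 4 * t := by
    rw [div_sub_one (ne_of_gt ht1), div_le_iff₀ ht1]
    nlinarith
  nlinarith

lemma diskDist_nonneg (a b : ℂ) : 0 ≤ diskDist a b :=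
  arctanh_nonneg _ (norm_nonneg _)

lemma diskDist_zero_real (x : ℝ) (hx : 0 ≤ x) : diskDist 0 (x:ℂ) = arctanh x := by
  simp [diskDist, _root_.abs_of_nonneg hx]

/-- The Kobayashi pseudodistance of a domain `D ⊆ ℂ^d`: the infimum, over chains of analytic
discs joining `p` to `q` within `D`, of the sums of Poincaré distances of the parameters. -/
noncomputable def kobayashiDist {d : ℕ} (D : Set (EuclideanSpace ℂ (Fin d)))
    (p q : EuclideanSpace ℂ (Fin d)) : ℝ :=
  sInf {r : ℝ | ∃ (n : ℕ) (φ : Fin (n + 1) → ℂ → EuclideanSpace ℂ (Fin d))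
      (a b : Fin (n + 1) → ℂ),
    (∀ i, DifferentiableOn ℂ (φ i) (ball (0 : ℂ) 1) ∧ MapsTo (φ i) (ball (0 : ℂ) 1) D ∧
      a i ∈ ball (0 : ℂ) 1 ∧ b i ∈ ball (0 : ℂ) 1) ∧
    φ 0 (a 0) = p ∧ φ (Fin.last n) (b (Fin.last n)) = q ∧
    (∀ i : Fin n, φ i.castSucc (b i.castSucc) = φ i.succ (a i.succ)) ∧
    r = ∑ i, diskDist (a i) (b i)}

/-- A domain is Kobayashi hyperbolic if its Kobayashi pseudodistance is a true distance,
i.e. positive off the diagonal. -/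
def KobayashiHyperbolic {d : ℕ} (D : Set (EuclideanSpace ℂ (Fin d))) : Prop :=
  ∀ p ∈ D, ∀ q ∈ D, p ≠ q → 0 < kobayashiDist D p q

set_option maxHeartbeats 2000000 in
/-- Main theorem (H(3) ⟹ H(1)): a Kobayashi hyperbolic domain `D ⊂ ℂ^d` containing the
origin, circularlike and spirallike with respect to (the complex-time flow `X` of) a complete
globally asymptotically stable holomorphic vector field `V` with `V(0) = 0`, is bounded
(equivalently, it contains no sequence with `‖z_k‖ → ∞`). -/
theorem stmt16 {d : ℕ} (D : Set (EuclideanSpace ℂ (Fin d)))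
    (hD : IsOpen D) (hDconn : IsConnected D) (h0 : (0 : EuclideanSpace ℂ (Fin d)) ∈ D)
    (V : EuclideanSpace ℂ (Fin d) → EuclideanSpace ℂ (Fin d))
    (hV : Differentiable ℂ V) (hV0 : V 0 = 0)
    (X : ℂ → EuclideanSpace ℂ (Fin d) → EuclideanSpace ℂ (Fin d))
    (hX0 : ∀ z, X 0 z = z)
    (hXadd : ∀ lam mu z, X (lam + mu) z = X lam (X mu z))
    (hXflow : ∀ z lam, HasDerivAt (fun mu => X mu z) (V (X lam z)) lam)
    (hXcont : Continuous fun p : ℂ × EuclideanSpace ℂ (Fin d) => X p.1 p.2)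
    (hstab : ∀ ε > (0 : ℝ), ∃ δ > (0 : ℝ), ∀ t : ℝ, 0 ≤ t → ∀ z, ‖z‖ < δ →
      ‖X (t : ℂ) z‖ < ε)
    (hattr : ∀ z, Tendsto (fun t : ℝ => X (t : ℂ) z) atTop (nhds 0))
    (hspiral : ∀ t : ℝ, 0 ≤ t → ∀ z ∈ D, X (t : ℂ) z ∈ D)
    (hcirc : ∀ s : ℝ, s ∈ Ioo (-(Real.pi / 2)) (Real.pi / 2) → ∀ z ∈ D,
      X ((s : ℂ) * Complex.I) z ∈ D)
    (hhyp : KobayashiHyperbolic D) :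
    Bornology.IsBounded D := by
  classical
  by_contra hub
  rw [isBounded_iff_forall_norm_le] at hub
  push_neg at hub
  -- Step 1: imaginary-time invariance for all s ∈ ℝ
  have himag : ∀ (s : ℝ), ∀ z ∈ D, X ((s:ℂ) * Complex.I) z ∈ D := by
    have key : ∀ n : ℕ, ∀ s : ℝ, |s| ≤ n → ∀ z ∈ D, X ((s:ℂ) * Complex.I) z ∈ D := by
      intro n
      induction n with
      | zero =>
        intro s hs z hz
        have hs0 : s = 0 := by
          have h1 := abs_nonneg s
          have h2 : |s| ≤ (0:ℝ) := by exact_mod_cast hs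
          exact abs_eq_zero.mp (le_antisymm h2 h1)
        subst hs0
        simpa [hX0] using hz
      | succ n ih =>
        intro s hs z hz
        have hn1 : (0:ℝ) < (n:ℝ) + 1 := by positivity
        have hnz : ((n:ℂ)+1) ≠ 0 := Nat.cast_add_one_ne_zero n
        have h1 : ((s:ℂ) * Complex.I) =
            ((((n:ℝ) * s/((n:ℝ)+1)) :ℝ):ℂ)*Complex.I + (((s/((n:ℝ)+1)):ℝ):ℂ)*Complex.I := by
          push_cast
          field_simp
        rw [h1, hXadd]
        have hs' : |s| ≤ (n:ℝ) + 1 := by push_cast at hs; linarith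
        have hfrac : |s/((n:ℝ)+1)| ≤ 1 := by
          rw [abs_div, _root_.abs_of_pos hn1, div_le_one hn1]; linarith
        have hpi : (1:ℝ) < Real.pi/2 := by linarith [Real.pi_gt_three]
        have hmem : s/((n:ℝ)+1) ∈ Ioo (-(Real.pi/2)) (Real.pi/2) := by
          rw [abs_le] at hfrac
          exact mem_Ioo.mpr ⟨by linarith [hfrac.1], by linarith [hfrac.2]⟩
        refine ih _ ?_ _ (hcirc _ hmem z hz)
        rw [abs_div, _root_.abs_of_pos hn1, div_le_iff₀ hn1, abs_mul, Nat.abs_cast]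
        have : (n:ℝ) * |s| ≤ (n:ℝ) * ((n:ℝ)+1) :=
          mul_le_mul_of_nonneg_left hs' (Nat.cast_nonneg n)
        linarith
    intro s z hz
    exact key ⌈|s|⌉₊ s (Nat.le_ceil _) z hz
  -- Step 2: half-plane invariance
  have hhalf : ∀ (lam : ℂ), 0 ≤ lam.re → ∀ z ∈ D, X lam z ∈ D := by
    intro lam h z hz
    have hdec : lam = (lam.re:ℂ) + (lam.im:ℂ) * Complex.I := (Complex.re_add_im lam).symm
    rw [hdec, hXadd]
    exact hspiral lam.re h _ (himag lam.im z hz)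
  -- Step 3: joint continuity of real-time flow
  have hcontR : Continuous (fun p : ℝ × EuclideanSpace ℂ (Fin d) => X ((p.1:ℝ):ℂ) p.2) := by
    have heq : (fun p : ℝ × EuclideanSpace ℂ (Fin d) => X ((p.1:ℝ):ℂ) p.2)
        = (fun p : ℂ × EuclideanSpace ℂ (Fin d) => X p.1 p.2)
          ∘ (fun p : ℝ × EuclideanSpace ℂ (Fin d) => (((p.1:ℝ):ℂ), p.2)) := rfl
    rw [heq]
    exact hXcont.comp ((Complex.continuous_ofReal.comp continuous_fst).prodMk continuous_snd)
  -- Step 4: radius r with closed ball inside D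
  obtain ⟨r, hrpos, hrball⟩ : ∃ r > 0, closedBall (0:EuclideanSpace ℂ (Fin d)) r ⊆ D := by
    obtain ⟨ε, hε, hsub⟩ := Metric.isOpen_iff.mp hD 0 h0
    exact ⟨ε/2, by positivity, (closedBall_subset_ball (by linarith)).trans hsub⟩
  -- Step 5: escape-time bound
  have hM : ∀ T : ℝ, ∃ M, ∀ z : EuclideanSpace ℂ (Fin d),
      (∃ t : ℝ, 0 ≤ t ∧ t ≤ T ∧ ‖X (t:ℂ) z‖ ≤ r) → ‖z‖ ≤ M := by
    intro T
    have hcomp : IsCompact ((fun p : ℝ × EuclideanSpace ℂ (Fin d) => X ((p.1:ℝ):ℂ) p.2) ''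
        ((Icc (-T) 0) ×ˢ closedBall (0:EuclideanSpace ℂ (Fin d)) r)) :=
      ((isCompact_Icc).prod (isCompact_closedBall _ _)).image hcontR
    obtain ⟨M, hMle⟩ := isBounded_iff_forall_norm_le.mp hcomp.isBounded
    refine ⟨M, ?_⟩
    rintro z ⟨t, ht0, htT, htr⟩
    have hz : z = X ((-t:ℝ):ℂ) (X (t:ℂ) z) := by
      rw [← hXadd]
      have h : ((-t:ℝ):ℂ) + (t:ℂ) = 0 := by push_cast; ring
      rw [h, hX0]
    rw [hz]
    apply hMle
    exact ⟨(-t, X (t:ℂ) z), mem_prod.mpr ⟨mem_Icc.mpr ⟨show -T ≤ -t by linarith, show -t ≤ (0:ℝ) by linarith⟩,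
      mem_closedBall_zero_iff.mpr htr⟩, rfl⟩
  choose M hMspec using hM
  -- Step 6: sequence of far points and hitting times
  have hseq : ∀ k : ℕ, ∃ z ∈ D, ∃ τ : ℝ, 0 ≤ τ ∧ ‖X (τ:ℂ) z‖ = r ∧ (k:ℝ) < τ := by
    intro k
    obtain ⟨z, hzD, hznorm⟩ := hub (max (M (k:ℝ)) r)
    refine ⟨z, hzD, ?_⟩
    have hzr : r < ‖z‖ := lt_of_le_of_lt (le_max_right _ _) hznorm
    have hzM : M (k:ℝ) < ‖z‖ := lt_of_le_of_lt (le_max_left _ _) hznorm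
    have hev : ∀ᶠ t : ℝ in atTop, ‖X (t:ℂ) z‖ < r := by
      have := (hattr z).norm
      rw [norm_zero] at this
      exact this.eventually_lt_const hrpos
    obtain ⟨T, hT⟩ := (hev.and (eventually_ge_atTop (0:ℝ))).exists
    have hcf : ContinuousOn (fun t : ℝ => ‖X ((t:ℝ):ℂ) z‖) (Icc 0 T) := by
      apply Continuous.continuousOn
      exact (hcontR.comp (continuous_id.prodMk continuous_const)).norm
    have hIV : r ∈ (fun t : ℝ => ‖X ((t:ℝ):ℂ) z‖) '' (Icc 0 T) := by
      apply intermediate_value_Icc' hT.2 hcf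
      constructor
      · exact le_of_lt hT.1
      · simpa [hX0] using le_of_lt hzr
    obtain ⟨τ, hτmem, hτeq⟩ := hIV
    refine ⟨τ, hτmem.1, hτeq, ?_⟩
    by_contra hle
    push_neg at hle
    exact absurd (hMspec (k:ℝ) z ⟨τ, hτmem.1, hle, le_of_eq hτeq⟩) (not_le.mpr hzM)
  choose z hzD τ hτ0 hτr hτk using hseq
  set w : ℕ → EuclideanSpace ℂ (Fin d) := fun k => X ((τ k : ℝ):ℂ) (z k) with hw
  have hwD : ∀ k, w k ∈ D := fun k => hspiral (τ k) (hτ0 k) (z k) (hzD k)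
  have hwball : ∀ k, w k ∈ closedBall (0:EuclideanSpace ℂ (Fin d)) r := fun k =>
    mem_closedBall_zero_iff.mpr (le_of_eq (hτr k))
  -- Step 7: compactness
  obtain ⟨w0, hw0mem, φ, hφmono, hφtend⟩ :=
    (isCompact_closedBall (0:EuclideanSpace ℂ (Fin d)) r).tendsto_subseq hwball
  have hw0norm : ‖w0‖ = r := by
    have h1 : Tendsto (fun j => ‖(w ∘ φ) j‖) atTop (nhds ‖w0‖) := hφtend.norm
    have h2 : Tendsto (fun j => ‖(w ∘ φ) j‖) atTop (nhds r) := by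
      have : (fun j => ‖(w ∘ φ) j‖) = fun _ => r := by
        funext j; exact hτr (φ j)
      rw [this]; exact tendsto_const_nhds
    exact tendsto_nhds_unique h1 h2
  have hw0D : w0 ∈ D := hrball (mem_closedBall_zero_iff.mpr (le_of_eq hw0norm))
  -- Step 8: pick S with X S w0 ≠ w0
  obtain ⟨S, hSpos, hSne⟩ : ∃ S : ℝ, 0 < S ∧ X (S:ℂ) w0 ≠ w0 := by
    by_contra hcon
    push_neg at hcon
    have heq : (fun t : ℝ => X (t:ℂ) w0) =ᶠ[atTop] (fun _ => w0) := by
      filter_upwards [eventually_gt_atTop (0:ℝ)] with t ht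
      exact hcon t ht
    have h1 : Tendsto (fun _ : ℝ => w0) atTop (nhds (0:EuclideanSpace ℂ (Fin d))) :=
      (tendsto_congr' heq).mp (hattr w0)
    have h2 : w0 = 0 := tendsto_nhds_unique tendsto_const_nhds h1
    rw [h2] at hw0norm
    simp at hw0norm
    linarith
  set q : EuclideanSpace ℂ (Fin d) := X (S:ℂ) w0 with hq
  have hqD : q ∈ D := hspiral S (le_of_lt hSpos) w0 hw0D
  have hκ := hhyp w0 hw0D q hqD (Ne.symm hSne)
  set κ := kobayashiDist D w0 q with hκdef
  -- Step 9: radius ρ around w0 and q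
  obtain ⟨ρ, hρpos, hρ1, hρ2⟩ : ∃ ρ > 0, ball w0 (2*ρ) ⊆ D ∧ ball q (2*ρ) ⊆ D := by
    obtain ⟨ρ1, hρ1pos, hs1⟩ := Metric.isOpen_iff.mp hD w0 hw0D
    obtain ⟨ρ2, hρ2pos, hs2⟩ := Metric.isOpen_iff.mp hD q hqD
    refine ⟨min ρ1 ρ2 / 2, by positivity, ?_, ?_⟩
    · exact (ball_subset_ball (by linarith [min_le_left ρ1 ρ2] :
        2 * (min ρ1 ρ2 / 2) ≤ ρ1)).trans hs1
    · exact (ball_subset_ball (by linarith [min_le_right ρ1 ρ2] :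
        2 * (min ρ1 ρ2 / 2) ≤ ρ2)).trans hs2
  -- Step 10: choose constants and a good index
  set ε0 := min (1/2 : ℝ) (κ/12) with hε0def
  have hε0pos : 0 < ε0 := lt_min (by norm_num) (by linarith)
  have hε0half : ε0 ≤ 1/2 := min_le_left _ _
  have hε0κ : ε0 ≤ κ/12 := min_le_right _ _
  have hA : ∀ᶠ j : ℕ in atTop, ‖w (φ j) - w0‖ < ρ * ε0 := by
    obtain ⟨N, hN⟩ := Metric.tendsto_atTop.mp hφtend (ρ*ε0) (by positivity)
    filter_upwards [eventually_ge_atTop N] with j hj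
    have h := hN j hj
    rwa [Function.comp_apply, dist_eq_norm] at h
  have hcS : Continuous (fun v : EuclideanSpace ℂ (Fin d) => X (S:ℂ) v) :=
    hXcont.comp (continuous_const.prodMk continuous_id)
  have hC : ∀ᶠ j : ℕ in atTop, ‖q - X (S:ℂ) (w (φ j))‖ < ρ * ε0 := by
    have htend : Tendsto (fun j => X (S:ℂ) (w (φ j))) atTop (nhds q) := by
      have := (hcS.tendsto w0).comp hφtend
      exact this
    obtain ⟨N, hN⟩ := Metric.tendsto_atTop.mp htend (ρ*ε0) (by positivity)
    filter_upwards [eventually_ge_atTop N] with j hj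
    have h := hN j hj
    rw [dist_eq_norm, norm_sub_rev] at h
    exact h
  obtain ⟨Nb, hNb⟩ := exists_nat_ge (S/(2*ε0))
  obtain ⟨j, ⟨hjA, hjC⟩, hjB⟩ := ((hA.and hC).and (eventually_ge_atTop Nb)).exists
  set k := φ j with hkdef
  set t := τ k with htdef
  set zk := z k with hzkdef
  set wk := w k with hwkdef
  have hwkX : wk = X ((t:ℝ):ℂ) zk := by rw [hwkdef, hw]
  have hzkD : zk ∈ D := hzD k
  have htpos : 0 < t := lt_of_le_of_lt (Nat.cast_nonneg k) (hτk k)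
  have htlarge : S/(2*ε0) ≤ t := by
    have h1 : (Nb:ℝ) ≤ (j:ℝ) := by exact_mod_cast hjB
    have h2 : (j:ℝ) ≤ (k:ℝ) := by exact_mod_cast hφmono.le_apply
    linarith [hτk k, hNb]
  set β := S/(2*t+S) with hβdef
  have hden : (0:ℝ) < 2*t+S := by linarith
  have hβ0 : 0 ≤ β := div_nonneg (le_of_lt hSpos) (le_of_lt hden)
  have hβ1 : β < 1 := by rw [hβdef, div_lt_one hden]; linarith
  have hβε : β ≤ ε0 := by
    rw [hβdef, div_le_iff₀ hden]
    have h3 : S ≤ 2*ε0*t := by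
      rw [div_le_iff₀ (by linarith : (0:ℝ) < 2*ε0)] at htlarge
      linarith
    nlinarith [mul_nonneg (le_of_lt hε0pos) (le_of_lt hSpos)]
  set η0 := ‖wk - w0‖/ρ with hη0def
  have hη00 : 0 ≤ η0 := div_nonneg (norm_nonneg _) (le_of_lt hρpos)
  have hη0ε : η0 < ε0 := by
    rw [hη0def, div_lt_iff₀ hρpos, mul_comm]
    exact hjA
  set η2 := ‖q - X (S:ℂ) wk‖/ρ with hη2def
  have hη20 : 0 ≤ η2 := div_nonneg (norm_nonneg _) (le_of_lt hρpos)
  have hη2ε : η2 < ε0 := by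
    rw [hη2def, div_lt_iff₀ hρpos, mul_comm]
    exact hjC
  have hε0lt1 : ε0 < 1 := lt_of_le_of_lt hε0half (by norm_num)
  -- Step 11: helper facts for the discs
  have hlin : ∀ (v : EuclideanSpace ℂ (Fin d)) (ζ : ℂ), ‖ζ‖ < 1 →
      ‖(ζ / ((‖v‖/ρ :ℝ):ℂ)) • v‖ < ρ := by
    intro v ζ hζ
    rw [norm_smul]
    by_cases hv : v = 0
    · simpa [hv] using hρpos
    · have hvn : 0 < ‖v‖ := norm_pos_iff.mpr hv
      have hnorm : ‖ζ / ((‖v‖/ρ :ℝ):ℂ)‖ * ‖v‖ = ‖ζ‖ * ρ := by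
        rw [norm_div, Complex.norm_real, Real.norm_eq_abs,
          _root_.abs_of_nonneg (by positivity : (0:ℝ) ≤ ‖v‖/ρ)]
        field_simp
      rw [hnorm]
      nlinarith [norm_nonneg ζ]
  have hlinend : ∀ (c v : EuclideanSpace ℂ (Fin d)),
      c + ((((‖v‖/ρ :ℝ):ℂ)) / (((‖v‖/ρ :ℝ):ℂ))) • v = c + v := by
    intro c v
    by_cases hv : v = 0
    · simp [hv]
    · have hvn : 0 < ‖v‖ := norm_pos_iff.mpr hv
      rw [div_self (Complex.ofReal_ne_zero.mpr (by positivity)), one_smul]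
  have hre : ∀ ζ : ℂ, ‖ζ‖ < 1 → 0 ≤ ((t:ℂ) * (1+ζ)/(1-ζ)).re := by
    intro ζ hζ
    rw [mul_div_assoc, Complex.re_ofReal_mul]
    apply mul_nonneg htpos.le
    rw [Complex.div_re, ← add_div]
    apply div_nonneg _ (Complex.normSq_nonneg _)
    have h1 : Complex.normSq ζ < 1 := by
      have h2 : ‖ζ‖ < 1 := hζ
      nlinarith [Complex.sq_norm ζ, norm_nonneg ζ]
    have h3 := Complex.normSq_apply ζ
    simp only [Complex.add_re, Complex.sub_re, Complex.one_re, Complex.add_im,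
      Complex.sub_im, Complex.one_im]
    nlinarith [h3]
  have hone : ∀ ζ : ℂ, ζ ∈ ball (0:ℂ) 1 → (1:ℂ) - ζ ≠ 0 := by
    intro ζ hζ hcon
    have h1 : ζ = 1 := by
      have := sub_eq_zero.mp hcon
      exact this.symm
    rw [h1] at hζ
    simp at hζ
  have hXdiffz : Differentiable ℂ (fun lam => X lam zk) :=
    fun lam => (hXflow zk lam).differentiableAt
  have hβne : (1:ℝ) - β ≠ 0 := by linarith
  have htime : (t:ℂ) * (1+((β:ℝ):ℂ))/(1-((β:ℝ):ℂ)) = ((t+S:ℝ):ℂ) := by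
    have hr2 : t * (1+β)/(1-β) = t + S := by
      rw [div_eq_iff hβne, hβdef]
      field_simp
      ring
    calc (t:ℂ) * (1+((β:ℝ):ℂ))/(1-((β:ℝ):ℂ)) = ((t * (1+β)/(1-β) : ℝ):ℂ) := by
          push_cast; ring
    _ = ((t+S:ℝ):ℂ) := by rw [hr2]
  -- the three discs
  have hle : κ ≤ diskDist 0 ((η0:ℝ):ℂ) + diskDist 0 ((β:ℝ):ℂ) + diskDist 0 ((η2:ℝ):ℂ) := by
    have hsum : diskDist 0 ((η0:ℝ):ℂ) + diskDist 0 ((β:ℝ):ℂ) + diskDist 0 ((η2:ℝ):ℂ)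
        = ∑ i : Fin 3, diskDist ((fun _ => (0:ℂ)) i)
            ((![((η0:ℝ):ℂ), ((β:ℝ):ℂ), ((η2:ℝ):ℂ)] : Fin 3 → ℂ) i) := by
      simp [Fin.sum_univ_three]
    rw [hκdef, hsum]
    unfold kobayashiDist
    apply csInf_le
    · refine ⟨0, ?_⟩
      rintro x ⟨n, φ', a', b', -, -, -, -, rfl⟩
      exact Finset.sum_nonneg fun i _ => diskDist_nonneg _ _
    · refine ⟨2,
        ![fun ζ => w0 + (ζ / ((η0:ℝ):ℂ)) • (wk - w0),
          fun ζ => X ((t:ℂ) * (1+ζ)/(1-ζ)) zk,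
          fun ζ => X (S:ℂ) wk + (ζ / ((η2:ℝ):ℂ)) • (q - X (S:ℂ) wk)],
        (fun _ => (0:ℂ)), ![((η0:ℝ):ℂ), ((β:ℝ):ℂ), ((η2:ℝ):ℂ)], ?_, ?_, ?_, ?_, rfl⟩
      · intro i
        fin_cases i
        · refine ⟨?_, ?_, ?_, ?_⟩
          · exact (((differentiable_id.div_const _).smul_const _).const_add _).differentiableOn
          · intro ζ hζ
            show w0 + (ζ / ((η0:ℝ):ℂ)) • (wk - w0) ∈ D
            apply hρ1
            rw [mem_ball, dist_eq_norm, add_sub_cancel_left]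
            have := hlin (wk - w0) ζ (mem_ball_zero_iff.mp hζ)
            rw [← hη0def] at this
            linarith
          · simp
          · show ((η0:ℝ):ℂ) ∈ ball (0:ℂ) 1
            rw [mem_ball_zero_iff, Complex.norm_real, Real.norm_eq_abs, _root_.abs_of_nonneg hη00]; linarith
        · refine ⟨?_, ?_, ?_, ?_⟩
          · apply Differentiable.comp_differentiableOn hXdiffz
            apply DifferentiableOn.div
            · exact (((differentiableOn_const _).add differentiableOn_id).const_mul _)
            · exact (differentiableOn_const _).sub differentiableOn_id
            · exact hone
          · intro ζ hζ
            exact hhalf _ (hre ζ (mem_ball_zero_iff.mp hζ)) zk hzkD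
          · simp
          · show ((β:ℝ):ℂ) ∈ ball (0:ℂ) 1
            rw [mem_ball_zero_iff, Complex.norm_real, Real.norm_eq_abs, _root_.abs_of_nonneg hβ0]; linarith
        · refine ⟨?_, ?_, ?_, ?_⟩
          · exact (((differentiable_id.div_const _).smul_const _).const_add _).differentiableOn
          · intro ζ hζ
            show X (S:ℂ) wk + (ζ / ((η2:ℝ):ℂ)) • (q - X (S:ℂ) wk) ∈ D
            apply hρ2
            rw [mem_ball, dist_eq_norm]
            have h4 : X (S:ℂ) wk + (ζ / ((η2:ℝ):ℂ)) • (q - X (S:ℂ) wk) - q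
                = (ζ / ((η2:ℝ):ℂ)) • (q - X (S:ℂ) wk) - (q - X (S:ℂ) wk) := by abel
            rw [h4]
            have h5 := hlin (q - X (S:ℂ) wk) ζ (mem_ball_zero_iff.mp hζ)
            rw [← hη2def] at h5
            have h6 : ‖q - X (S:ℂ) wk‖ < ρ * ε0 := hjC
            calc ‖(ζ / ((η2:ℝ):ℂ)) • (q - X (S:ℂ) wk) - (q - X (S:ℂ) wk)‖
                ≤ ‖(ζ / ((η2:ℝ):ℂ)) • (q - X (S:ℂ) wk)‖ + ‖q - X (S:ℂ) wk‖ :=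
                  norm_sub_le _ _
            _ < ρ + ρ * ε0 := by linarith
            _ ≤ 2 * ρ := by nlinarith
          · simp
          · show ((η2:ℝ):ℂ) ∈ ball (0:ℂ) 1
            rw [mem_ball_zero_iff, Complex.norm_real, Real.norm_eq_abs, _root_.abs_of_nonneg hη20]; linarith
      · -- first endpoint
        show w0 + ((0:ℂ) / ((η0:ℝ):ℂ)) • (wk - w0) = w0
        simp
      · -- last endpoint
        show X (S:ℂ) wk + ((((η2:ℝ):ℂ)) / (((η2:ℝ):ℂ))) • (q - X (S:ℂ) wk) = q
        rw [hη2def]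
        rw [hlinend (X (S:ℂ) wk) (q - X (S:ℂ) wk)]
        abel
      · -- chain conditions
        intro i
        fin_cases i
        · show w0 + ((((η0:ℝ):ℂ)) / (((η0:ℝ):ℂ))) • (wk - w0)
              = X ((t:ℂ) * (1+(0:ℂ))/(1-(0:ℂ))) zk
          rw [hη0def]
          have h7 := hlinend w0 (wk - w0)
          rw [h7]
          have h8 : (t:ℂ) * (1+(0:ℂ))/(1-(0:ℂ)) = ((t:ℝ):ℂ) := by norm_num
          rw [h8, ← hwkX]
          abel
        · show X ((t:ℂ) * (1+((β:ℝ):ℂ))/(1-((β:ℝ):ℂ))) zk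
              = X (S:ℂ) wk + ((0:ℂ) / ((η2:ℝ):ℂ)) • (q - X (S:ℂ) wk)
          rw [htime]
          have h9 : ((t+S:ℝ):ℂ) = (S:ℂ) + (t:ℂ) := by push_cast; ring
          rw [h9, hXadd, ← hwkX]
          simp
  -- Step 12: contradiction
  have e0 : diskDist 0 ((η0:ℝ):ℂ) = arctanh η0 := diskDist_zero_real _ hη00
  have e1 : diskDist 0 ((β:ℝ):ℂ) = arctanh β := diskDist_zero_real _ hβ0
  have e2 : diskDist 0 ((η2:ℝ):ℂ) = arctanh η2 := diskDist_zero_real _ hη20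
  have b0 : arctanh η0 ≤ 2 * η0 := arctanh_le_two_mul _ hη00 (by linarith)
  have b1 : arctanh β ≤ 2 * β := arctanh_le_two_mul _ hβ0 (by linarith)
  have b2 : arctanh η2 ≤ 2 * η2 := arctanh_le_two_mul _ hη20 (by linarith)
  rw [e0, e1, e2] at hle
  linarith
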